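/- Let R be a commutative ring, A a commutative R-algebra, and (L, ρ) an (R,A)-Lie algebra (Lie–Rinehart algebra). Let B be a commutative R-algebra with an R-algebra homomorphism φ : A → B, and suppose the anchor map ρ : L → Der_R(A) lifts to an A-linear Lie algebra homomorphism σ : L → Der_R(B), in the sense that σ(x) ∘ φ = φ ∘ ρ(x) for all x ∈ L. Then the B-module B ⊗_A L carries a unique (R,B)-Lie algebra structure with anchor 1 ⊗ σ, where the bracket is given by [b⊗x, b'⊗x'] = bb'⊗[x,x'] − b'σ(x')(b)⊗x + bσ(x)(b')⊗x'. -/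
import Mathlib


open scoped TensorProduct


section Aux
variable {R A B L : Type*} [CommRing R] [CommRing A] [Algebra R A]
    [CommRing B] [Algebra R B] [Algebra A B] [IsScalarTower R A B]
    [LieRing L] [LieAlgebra R L] [Module A L] [IsScalarTower R A L]

lemma lrSigmaZero (σ : L → Derivation R B B) (hσadd : ∀ x y : L, σ (x + y) = σ x + σ y) :
    σ (0 : L) = 0 := by
  have h := (hσadd 0 0).symm
  rwa [add_zero, add_eq_left] at h

/-- inner additive map: fixing `b, x`, the map `(b', x') ↦ ⁅b⊗x, b'⊗x'⁆`. -/
noncomputable def lrG (σ : L → Derivation R B B) (hσadd : ∀ x y : L, σ (x + y) = σ x + σ y)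
    (b : B) (x : L) : B →+ L →+ B ⊗[A] L where
  toFun b' :=
  { toFun := fun x' =>
      (b * b') ⊗ₜ[A] ⁅x, x'⁆ - (b' * σ x' b) ⊗ₜ[A] x + (b * σ x b') ⊗ₜ[A] x'
    map_zero' := by simp [lrSigmaZero σ hσadd]
    map_add' := fun y z => by
      simp only [lie_add, hσadd, Derivation.add_apply, mul_add,
        TensorProduct.tmul_add, TensorProduct.add_tmul]
      abel }
  map_zero' := by
    ext x'; simp
  map_add' c d := by
    ext x'
    simp only [AddMonoidHom.coe_mk, ZeroHom.coe_mk, AddMonoidHom.add_apply, mul_add, add_mul,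
      map_add, TensorProduct.tmul_add, TensorProduct.add_tmul]
    abel

lemma lrG_apply (σ : L → Derivation R B B) (hσadd : ∀ x y : L, σ (x + y) = σ x + σ y)
    (b : B) (x : L) (b' : B) (x' : L) :
    lrG (A := A) σ hσadd b x b' x' =
      (b * b') ⊗ₜ[A] ⁅x, x'⁆ - (b' * σ x' b) ⊗ₜ[A] x + (b * σ x b') ⊗ₜ[A] x' := rfl

end Aux

section Aux2
set_option linter.unusedSectionVars false
variable {R A B L : Type*} [CommRing R] [CommRing A] [Algebra R A]
    [CommRing B] [Algebra R B] [Algebra A B] [IsScalarTower R A B]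
    [LieRing L] [LieAlgebra R L] [Module A L] [IsScalarTower R A L]
    (ρ : L →ₗ[A] Derivation R A A)
    (hLeib : ∀ (x y : L) (a : A), ⁅x, a • y⁆ = a • ⁅x, y⁆ + ρ x a • y)
    (σ : L → Derivation R B B)
    (hσadd : ∀ x y : L, σ (x + y) = σ x + σ y)
    (hσA : ∀ (a : A) (x : L), σ (a • x) = algebraMap A B a • σ x)
    (hσlift : ∀ (x : L) (a : A), σ x (algebraMap A B a) = algebraMap A B (ρ x a))

include hLeib hσA hσlift in
lemma lrG_balanced (b : B) (x : L) (a : A) (b' : B) (x' : L) :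
    lrG (A := A) σ hσadd b x (a • b') x' = lrG (A := A) σ hσadd b x b' (a • x') := by
  simp only [lrG_apply, hLeib, hσA, Algebra.smul_def, Derivation.leibniz, hσlift,
    smul_eq_mul, Derivation.smul_apply, TensorProduct.tmul_add, TensorProduct.tmul_smul,
    TensorProduct.smul_tmul', mul_add, add_mul, Algebra.algebraMap_self, RingHom.id_apply]
  ring_nf
  simp only [TensorProduct.add_tmul, TensorProduct.sub_tmul]
  abel
end Aux2

section Aux3
set_option linter.unusedSectionVars false
variable {R A B L : Type*} [CommRing R] [CommRing A] [Algebra R A]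
    [CommRing B] [Algebra R B] [Algebra A B] [IsScalarTower R A B]
    [LieRing L] [LieAlgebra R L] [Module A L] [IsScalarTower R A L]
    (ρ : L →ₗ[A] Derivation R A A)
    (hLeib : ∀ (x y : L) (a : A), ⁅x, a • y⁆ = a • ⁅x, y⁆ + ρ x a • y)
    (σ : L → Derivation R B B)
    (hσadd : ∀ x y : L, σ (x + y) = σ x + σ y)
    (hσA : ∀ (a : A) (x : L), σ (a • x) = algebraMap A B a • σ x)
    (hσlift : ∀ (x : L) (a : A), σ x (algebraMap A B a) = algebraMap A B (ρ x a))

/-- `⁅b⊗x, ·⁆` as an additive map on the tensor product. -/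
noncomputable def lrF (b : B) (x : L) : B ⊗[A] L →+ B ⊗[A] L :=
  TensorProduct.liftAddHom (lrG (A := A) σ hσadd b x)
    (fun a b' x' => lrG_balanced ρ hLeib σ hσadd hσA hσlift b x a b' x')

lemma lrF_tmul (b : B) (x : L) (b' : B) (x' : L) :
    lrF ρ hLeib σ hσadd hσA hσlift b x (b' ⊗ₜ[A] x') =
      (b * b') ⊗ₜ[A] ⁅x, x'⁆ - (b' * σ x' b) ⊗ₜ[A] x + (b * σ x b') ⊗ₜ[A] x' := rfl

lemma lrF_add_left (b c : B) (x : L) :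
    lrF ρ hLeib σ hσadd hσA hσlift (b + c) x =
      lrF ρ hLeib σ hσadd hσA hσlift b x + lrF ρ hLeib σ hσadd hσA hσlift c x := by
  ext u
  refine TensorProduct.induction_on u (by simp) (fun b' x' => ?_) (fun u v hu hv => ?_)
  · simp only [lrF_tmul, AddMonoidHom.add_apply, add_mul, mul_add, map_add,
      TensorProduct.tmul_add, TensorProduct.add_tmul]
    abel
  · simp only [map_add, AddMonoidHom.add_apply] at hu hv ⊢
    rw [hu, hv]

lemma lrF_add_right (b : B) (x y : L) :
    lrF ρ hLeib σ hσadd hσA hσlift b (x + y) =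
      lrF ρ hLeib σ hσadd hσA hσlift b x + lrF ρ hLeib σ hσadd hσA hσlift b y := by
  ext u
  refine TensorProduct.induction_on u (by simp) (fun b' x' => ?_) (fun u v hu hv => ?_)
  · simp only [lrF_tmul, AddMonoidHom.add_apply, add_lie, hσadd, Derivation.add_apply,
      mul_add, TensorProduct.tmul_add, TensorProduct.add_tmul]
    abel
  · simp only [map_add, AddMonoidHom.add_apply] at hu hv ⊢
    rw [hu, hv]

lemma lrF_zero_left (x : L) : lrF ρ hLeib σ hσadd hσA hσlift 0 x = 0 := by
  have h := lrF_add_left ρ hLeib σ hσadd hσA hσlift 0 0 x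
  rw [add_zero] at h
  exact (add_eq_left.mp h.symm)

lemma lrF_zero_right (b : B) : lrF ρ hLeib σ hσadd hσA hσlift b 0 = 0 := by
  have h := lrF_add_right ρ hLeib σ hσadd hσA hσlift b 0 0
  rw [add_zero] at h
  exact (add_eq_left.mp h.symm)

/-- the bracket as a twice-additive map. -/
noncomputable def lrH : B →+ L →+ (B ⊗[A] L →+ B ⊗[A] L) where
  toFun b :=
  { toFun := fun x => lrF ρ hLeib σ hσadd hσA hσlift b x
    map_zero' := lrF_zero_right ρ hLeib σ hσadd hσA hσlift b
    map_add' := lrF_add_right ρ hLeib σ hσadd hσA hσlift b }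
  map_zero' := by
    ext x : 1
    exact lrF_zero_left ρ hLeib σ hσadd hσA hσlift x
  map_add' b c := by
    ext x : 1
    exact lrF_add_left ρ hLeib σ hσadd hσA hσlift b c x

include hLeib hσA hσlift in
lemma lrH_balanced (a : A) (b : B) (x : L) :
    lrH ρ hLeib σ hσadd hσA hσlift (a • b) x = lrH ρ hLeib σ hσadd hσA hσlift b (a • x) := by
  ext u
  refine TensorProduct.induction_on u (by simp) (fun b' x' => ?_) (fun u v hu hv => ?_)
  · show lrF ρ hLeib σ hσadd hσA hσlift (a • b) x (b' ⊗ₜ[A] x')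
      = lrF ρ hLeib σ hσadd hσA hσlift b (a • x) (b' ⊗ₜ[A] x')
    have hskew : ⁅a • x, x'⁆ = a • ⁅x, x'⁆ - ρ x' a • x := by
      rw [← lie_skew, hLeib, ← lie_skew x x']
      module
    simp only [lrF_tmul, hskew, hσA, Algebra.smul_def, Derivation.leibniz, hσlift,
      smul_eq_mul, Derivation.smul_apply, TensorProduct.tmul_add, TensorProduct.tmul_sub,
      TensorProduct.tmul_smul, TensorProduct.smul_tmul', mul_add, add_mul,
      Algebra.algebraMap_self, RingHom.id_apply]
    ring_nf
    simp only [TensorProduct.add_tmul, TensorProduct.sub_tmul]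
    abel
  · show lrF ρ hLeib σ hσadd hσA hσlift (a • b) x (u + v)
      = lrF ρ hLeib σ hσadd hσA hσlift b (a • x) (u + v)
    simp only [map_add]
    exact congrArg₂ (· + ·) hu hv

end Aux3

section Aux4
set_option linter.unusedSectionVars false
variable {R A B L : Type*} [CommRing R] [CommRing A] [Algebra R A]
    [CommRing B] [Algebra R B] [Algebra A B] [IsScalarTower R A B]
    [LieRing L] [LieAlgebra R L] [Module A L] [IsScalarTower R A L]
    (ρ : L →ₗ[A] Derivation R A A)
    (hLeib : ∀ (x y : L) (a : A), ⁅x, a • y⁆ = a • ⁅x, y⁆ + ρ x a • y)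
    (σ : L → Derivation R B B)
    (hσadd : ∀ x y : L, σ (x + y) = σ x + σ y)
    (hσA : ∀ (a : A) (x : L), σ (a • x) = algebraMap A B a • σ x)
    (hσlift : ∀ (x : L) (a : A), σ x (algebraMap A B a) = algebraMap A B (ρ x a))

/-- the bracket as an additive map in both tensor arguments. -/
noncomputable def lrBr0 : B ⊗[A] L →+ (B ⊗[A] L →+ B ⊗[A] L) :=
  TensorProduct.liftAddHom (lrH ρ hLeib σ hσadd hσA hσlift)
    (fun a b x => lrH_balanced ρ hLeib σ hσadd hσA hσlift a b x)

lemma lrBr0_tmul (b : B) (x : L) (b' : B) (x' : L) :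
    lrBr0 ρ hLeib σ hσadd hσA hσlift (b ⊗ₜ[A] x) (b' ⊗ₜ[A] x') =
      (b * b') ⊗ₜ[A] ⁅x, x'⁆ - (b' * σ x' b) ⊗ₜ[A] x + (b * σ x b') ⊗ₜ[A] x' := rfl

lemma lrBr0_smul_right (r : R) (u v : B ⊗[A] L) :
    lrBr0 ρ hLeib σ hσadd hσA hσlift u (r • v) = r • lrBr0 ρ hLeib σ hσadd hσA hσlift u v := by
  refine TensorProduct.induction_on u (by simp) (fun b x => ?_) (fun p q hp hq => ?_)
  · refine TensorProduct.induction_on v (by simp) (fun b' x' => ?_) (fun p q hp hq => ?_)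
    · rw [TensorProduct.smul_tmul']
      simp only [lrBr0_tmul, Derivation.map_smul, smul_mul_assoc, mul_smul_comm,
        TensorProduct.smul_tmul', smul_add, smul_sub]
    · rw [smul_add, map_add, map_add, hp, hq, smul_add]
  · simp only [map_add, AddMonoidHom.add_apply, hp, hq, smul_add]

lemma lrBr0_smul_left (r : R) (u v : B ⊗[A] L) :
    lrBr0 ρ hLeib σ hσadd hσA hσlift (r • u) v = r • lrBr0 ρ hLeib σ hσadd hσA hσlift u v := by
  refine TensorProduct.induction_on u (by simp) (fun b x => ?_) (fun p q hp hq => ?_)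
  · rw [TensorProduct.smul_tmul']
    refine TensorProduct.induction_on v (by simp) (fun b' x' => ?_) (fun p q hp hq => ?_)
    · simp only [lrBr0_tmul, Derivation.map_smul, smul_mul_assoc, mul_smul_comm,
        TensorProduct.smul_tmul', smul_add, smul_sub]
    · rw [map_add, map_add, hp, hq, smul_add]
  · rw [smul_add, map_add, map_add, AddMonoidHom.add_apply, hp, hq, AddMonoidHom.add_apply,
      smul_add]

/-- the bracket as an `R`-bilinear map. -/
noncomputable def lrBr : (B ⊗[A] L) →ₗ[R] (B ⊗[A] L) →ₗ[R] (B ⊗[A] L) where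
  toFun u :=
  { toFun := fun v => lrBr0 ρ hLeib σ hσadd hσA hσlift u v
    map_add' := fun v w => map_add _ v w
    map_smul' := fun r v => lrBr0_smul_right ρ hLeib σ hσadd hσA hσlift r u v }
  map_add' u v := by
    ext w
    simp [map_add]
  map_smul' r u := by
    ext w
    simp [lrBr0_smul_left]

lemma lrBr_tmul (b : B) (x : L) (b' : B) (x' : L) :
    lrBr ρ hLeib σ hσadd hσA hσlift (b ⊗ₜ[A] x) (b' ⊗ₜ[A] x') =
      (b * b') ⊗ₜ[A] ⁅x, x'⁆ - (b' * σ x' b) ⊗ₜ[A] x + (b * σ x b') ⊗ₜ[A] x' := rfl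

end Aux4


set_option maxHeartbeats 2000000 in
/-- base change of Lie–Rinehart algebras.
Let `R` be a commutative ring, `A` a commutative `R`-algebra and `(L, ρ)` an `(R,A)`-Lie
algebra: `L` is an `R`-Lie algebra and an `A`-module, the anchor `ρ : L → Der_R(A)` is an
`A`-linear Lie algebra homomorphism, and the Leibniz rule `⁅x, a•y⁆ = a•⁅x,y⁆ + ρ(x)(a)•y`
holds.  Let `φ : A → B` be a homomorphism of commutative `R`-algebras (recorded here by the
`Algebra A B` instance) and suppose the anchor lifts to an `A`-linear Lie algebra
homomorphism `σ : L → Der_R(B)`, i.e. `σ(x)(φ(a)) = φ(ρ(x)(a))`.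

Then `B ⊗_A L` carries a unique `R`-bilinear bracket satisfying
`⁅b⊗x, b'⊗x'⁆ = bb' ⊗ ⁅x,x'⁆ − b'·σ(x')(b) ⊗ x + b·σ(x)(b') ⊗ x'`,
and this bracket makes `B ⊗_A L` an `(R,B)`-Lie algebra with anchor `1 ⊗ σ`:
it is alternating, satisfies the (Leibniz form of the) Jacobi identity, and the
Lie–Rinehart Leibniz identity with respect to the `B`-module structure and the anchor. -/
theorem lieRinehart_base_change
    {R A B L : Type*} [CommRing R] [CommRing A] [Algebra R A]
    [CommRing B] [Algebra R B] [Algebra A B] [IsScalarTower R A B]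
    [LieRing L] [LieAlgebra R L] [Module A L] [IsScalarTower R A L]
    (ρ : L →ₗ[A] Derivation R A A)
    (hρLie : ∀ x y : L, ∀ a : A, ρ ⁅x, y⁆ a = ρ x (ρ y a) - ρ y (ρ x a))
    (hLeib : ∀ (x y : L) (a : A), ⁅x, a • y⁆ = a • ⁅x, y⁆ + ρ x a • y)
    (σ : L → Derivation R B B)
    (hσadd : ∀ x y : L, σ (x + y) = σ x + σ y)
    (hσA : ∀ (a : A) (x : L), σ (a • x) = algebraMap A B a • σ x)
    (hσLie : ∀ x y : L, ∀ b : B, σ ⁅x, y⁆ b = σ x (σ y b) - σ y (σ x b))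
    (hσlift : ∀ (x : L) (a : A), σ x (algebraMap A B a) = algebraMap A B (ρ x a)) :
    (∃! br : (B ⊗[A] L) →ₗ[R] (B ⊗[A] L) →ₗ[R] (B ⊗[A] L),
        ∀ (b b' : B) (x x' : L),
          br (b ⊗ₜ[A] x) (b' ⊗ₜ[A] x') =
            (b * b') ⊗ₜ[A] ⁅x, x'⁆ - (b' * σ x' b) ⊗ₜ[A] x + (b * σ x b') ⊗ₜ[A] x') ∧
      ∀ br : (B ⊗[A] L) →ₗ[R] (B ⊗[A] L) →ₗ[R] (B ⊗[A] L),
        (∀ (b b' : B) (x x' : L),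
            br (b ⊗ₜ[A] x) (b' ⊗ₜ[A] x') =
              (b * b') ⊗ₜ[A] ⁅x, x'⁆ - (b' * σ x' b) ⊗ₜ[A] x + (b * σ x b') ⊗ₜ[A] x') →
          (∀ u : B ⊗[A] L, br u u = 0) ∧
          (∀ u v : B ⊗[A] L, br u v = - br v u) ∧
          (∀ u v w : B ⊗[A] L, br u (br v w) = br (br u v) w + br v (br u w)) ∧
          (∀ (b : B) (x : L) (c : B) (v : B ⊗[A] L),
            br (b ⊗ₜ[A] x) (c • v) = c • br (b ⊗ₜ[A] x) v + (b * σ x c) • v) := by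
  constructor
  · -- existence and uniqueness
    refine ⟨lrBr ρ hLeib σ hσadd hσA hσlift, fun b b' x x' => rfl, ?_⟩
    intro br' h'
    apply LinearMap.ext; intro u
    apply LinearMap.ext; intro v
    induction u using TensorProduct.induction_on with
    | zero => simp
    | tmul b x =>
      induction v using TensorProduct.induction_on with
      | zero => simp
      | tmul b' x' => rw [h', lrBr_tmul]
      | add p q hp hq => rw [map_add, map_add, hp, hq]
    | add p q hp hq => rw [map_add, map_add, LinearMap.add_apply, LinearMap.add_apply, hp, hq]
  · -- properties
    intro br h
    have hanti : ∀ u v : B ⊗[A] L, br u v = - br v u := by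
      intro u v
      induction u using TensorProduct.induction_on with
      | zero => simp
      | tmul b x =>
        induction v using TensorProduct.induction_on with
        | zero => simp
        | tmul b' x' =>
          rw [h, h, show ⁅x', x⁆ = -⁅x, x'⁆ from (lie_skew x' x).symm]
          rw [mul_comm b' b]
          simp only [TensorProduct.tmul_neg]
          abel
        | add p q hp hq => rw [map_add, hp, hq, map_add, LinearMap.add_apply]; abel
      | add p q hp hq =>
        rw [map_add, LinearMap.add_apply, hp, hq, map_add]; abel
    have halt : ∀ u : B ⊗[A] L, br u u = 0 := by
      intro u
      induction u using TensorProduct.induction_on with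
      | zero => simp
      | tmul b x => rw [h]; simp
      | add p q hp hq =>
        simp only [map_add, LinearMap.add_apply, hp, hq]
        rw [hanti q p]
        abel
    refine ⟨halt, hanti, ?_, ?_⟩
    · -- Jacobi
      intro u v w
      induction u using TensorProduct.induction_on with
      | zero => simp
      | tmul b x =>
        induction v using TensorProduct.induction_on with
        | zero => simp
        | tmul c y =>
          induction w using TensorProduct.induction_on with
          | zero => simp
          | tmul d z =>
            simp only [h, map_add, map_sub, LinearMap.add_apply, LinearMap.sub_apply, h,
              hσLie, lie_lie, Derivation.leibniz, smul_eq_mul,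
              lie_add, lie_sub, add_lie, sub_lie,
              TensorProduct.tmul_add, TensorProduct.tmul_sub,
              TensorProduct.add_tmul, TensorProduct.sub_tmul,
              mul_add, add_mul, mul_sub, sub_mul]
            simp only [neg_eq_iff_eq_neg.mp (lie_skew x y), neg_eq_iff_eq_neg.mp (lie_skew x z),
              neg_eq_iff_eq_neg.mp (lie_skew y z), TensorProduct.tmul_neg]
            ring_nf
            try simp only [TensorProduct.add_tmul, TensorProduct.sub_tmul, TensorProduct.tmul_add, TensorProduct.tmul_sub, TensorProduct.tmul_neg]
            abel
          | add p q hp hq =>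
            simp only [map_add, LinearMap.add_apply] at hp hq ⊢
            rw [hp, hq]; abel
        | add p q hp hq =>
          simp only [map_add, LinearMap.add_apply] at hp hq ⊢
          rw [hp, hq]; abel
      | add p q hp hq =>
        simp only [map_add, LinearMap.add_apply] at hp hq ⊢
        rw [hp, hq]; abel
    · -- Lie–Rinehart Leibniz rule
      intro b x c v
      induction v using TensorProduct.induction_on with
      | zero => simp
      | tmul b' x' =>
        rw [show c • (b' ⊗ₜ[A] x') = (c * b') ⊗ₜ[A] x' from rfl, h, h]
        simp only [Derivation.leibniz, smul_eq_mul, mul_add, add_mul,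
          TensorProduct.smul_tmul', smul_eq_mul,
          TensorProduct.tmul_add, TensorProduct.add_tmul, TensorProduct.sub_tmul,
          smul_add, smul_sub]
        ring_nf
        try simp only [TensorProduct.add_tmul, TensorProduct.sub_tmul, TensorProduct.tmul_add, TensorProduct.tmul_sub]
        abel
      | add p q hp hq =>
        rw [smul_add, map_add, hp, hq, map_add, smul_add, smul_add]
        abel
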